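/- arXiv:0709.3752 — 2 statements merged into one kernel-verified Lean document; each statement's English description precedes it below -/
import Mathlib

section
/- Let T be a positive trace-class operator on a Hilbert space H, and let {h_k}_{k∈J} be a frame for H with frame bounds A, B > 0 (i.e., A‖f‖² ≤ Σ_k |⟨f, h_k⟩|² ≤ B‖f‖² for all f ∈ H). Then (1/B) Σ_k ⟨T h_k, h_k⟩ ≤ tr T ≤ (1/A) Σ_k ⟨T h_k, h_k⟩. -/
open scoped ComplexInnerProductSpace

/-- Trace-frame inequality: if `T` is a positive trace-class operator given by its
spectral decomposition `T f = ∑ λⱼ ⟨f, φⱼ⟩ φⱼ` (orthonormal `φ`, `λⱼ ≥ 0`, `∑ λⱼ < ∞`,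
so `tr T = ∑ λⱼ`), and `{h k}` is a frame with bounds `A, B > 0`, then
`B⁻¹ ∑ₖ ⟨T hₖ, hₖ⟩ ≤ tr T ≤ A⁻¹ ∑ₖ ⟨T hₖ, hₖ⟩`. -/
theorem trace_frame_inequality
    {H : Type*} [NormedAddCommGroup H] [InnerProductSpace ℂ H] [CompleteSpace H]
    {J K : Type*} (h : J → H) (A B : ℝ) (hA : 0 < A) (hB : 0 < B)
    (hframe : ∀ f : H, A * ‖f‖ ^ 2 ≤ (∑' k : J, ‖⟪f, h k⟫‖ ^ 2) ∧
      (∑' k : J, ‖⟪f, h k⟫‖ ^ 2) ≤ B * ‖f‖ ^ 2)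
    (φ : K → H) (hφ : Orthonormal ℂ φ) (lam : K → ℝ) (hlam : ∀ j, 0 ≤ lam j)
    (hsum : Summable lam)
    (T : H →L[ℂ] H)
    (hT : ∀ f : H, T f = ∑' j : K, (lam j : ℂ) • (⟪φ j, f⟫ • φ j)) :
    (1 / B) * (∑' k : J, (⟪T (h k), h k⟫).re) ≤ (∑' j : K, lam j) ∧
      (∑' j : K, lam j) ≤ (1 / A) * (∑' k : J, (⟪T (h k), h k⟫).re) := by
  classical
  have hφ1 : ∀ j, ‖φ j‖ = 1 := fun j => hφ.1 j
  set F : K → H → ℝ := fun j f => lam j * ‖⟪φ j, f⟫‖ ^ 2 with hFdef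
  have hFnn : ∀ j f, 0 ≤ F j f := fun j f => mul_nonneg (hlam j) (by positivity)
  have hbessel : ∀ (j : K) (f : H), ‖⟪φ j, f⟫‖ ^ 2 ≤ ‖f‖ ^ 2 := by
    intro j f
    have h1 : ‖⟪φ j, f⟫‖ ≤ ‖f‖ := by
      simpa [hφ1 j] using norm_inner_le_norm (𝕜 := ℂ) (φ j) f
    have h0 : (0:ℝ) ≤ ‖⟪φ j, f⟫‖ := norm_nonneg _
    nlinarith
  have hFsummable : ∀ f : H, Summable (fun j => F j f) := by
    intro f
    refine Summable.of_nonneg_of_le (fun j => hFnn j f) (fun j => ?_)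
      (hsum.mul_right (‖f‖ ^ 2))
    exact mul_le_mul_of_nonneg_left (hbessel j f) (hlam j)
  -- the key pointwise identity
  have hre : ∀ f : H, (⟪T f, f⟫).re = ∑' j, F j f := by
    intro f
    have hsumH : Summable (fun j => ((lam j : ℂ) * ⟪φ j, f⟫) • φ j) := by
      have hiff := hφ.orthogonalFamily.summable_iff_norm_sq_summable
        (fun j => (lam j : ℂ) * ⟪φ j, f⟫)
      simp only [LinearIsometry.toSpanSingleton_apply] at hiff
      rw [hiff]
      refine Summable.of_nonneg_of_le (fun j => by positivity) (fun j => ?_)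
        ((hsum.mul_right ((∑' i, lam i) * ‖f‖ ^ 2)))
      have hlamle : lam j ≤ ∑' i, lam i := hsum.le_tsum j fun i _ => hlam i
      have h1 : ‖(lam j : ℂ) * ⟪φ j, f⟫‖ ^ 2 = lam j ^ 2 * ‖⟪φ j, f⟫‖ ^ 2 := by
        rw [norm_mul, mul_pow, Complex.norm_real, Real.norm_eq_abs, sq_abs]
      rw [h1]
      have h2 : lam j ^ 2 * ‖⟪φ j, f⟫‖ ^ 2 ≤ lam j ^ 2 * ‖f‖ ^ 2 :=
        mul_le_mul_of_nonneg_left (hbessel j f) (by positivity)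
      have h3 : lam j ^ 2 * ‖f‖ ^ 2 ≤ lam j * ((∑' i, lam i) * ‖f‖ ^ 2) := by
        have : lam j ^ 2 ≤ lam j * (∑' i, lam i) := by
          rw [sq]; exact mul_le_mul_of_nonneg_left hlamle (hlam j)
        nlinarith [sq_nonneg ‖f‖]
      linarith
    have hTf : T f = ∑' j, ((lam j : ℂ) * ⟪φ j, f⟫) • φ j := by
      rw [hT f]
      exact tsum_congr fun j => (smul_smul _ _ _)
    have h2 : ⟪f, T f⟫ = ∑' j, ((F j f : ℝ) : ℂ) := by
      rw [hTf, show (inner ℂ f (∑' j, ((lam j : ℂ) * ⟪φ j, f⟫) • φ j) : ℂ)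
          = innerSL ℂ f (∑' j, ((lam j : ℂ) * ⟪φ j, f⟫) • φ j) from rfl,
        (innerSL ℂ f).map_tsum hsumH]
      refine tsum_congr fun j => ?_
      simp only [innerSL_apply_apply, inner_smul_right]
      rw [← inner_conj_symm (φ j) f, mul_assoc, RCLike.conj_mul,
        norm_inner_symm (𝕜 := ℂ) f (φ j), hFdef]
      simp [RCLike.ofReal_mul, Complex.ofReal_mul]
    have h3 : (⟪T f, f⟫).re = (⟪f, T f⟫).re := by
      rw [← inner_conj_symm f (T f)]; exact Complex.conj_re _
    rw [h3, h2]
    rw [← Complex.ofReal_tsum]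
    simp
  -- summability in k
  have hsumk : ∀ f : H, Summable (fun k : J => ‖⟪f, h k⟫‖ ^ 2) := by
    intro f
    rcases eq_or_ne f 0 with rfl | hf
    · simpa using summable_zero
    by_contra hc
    have h1 := (hframe f).1
    rw [tsum_eq_zero_of_not_summable hc] at h1
    have h2 : 0 < ‖f‖ := norm_pos_iff.mpr hf
    nlinarith [mul_pos hA (pow_pos h2 2)]
  set S : K → ℝ := fun j => ∑' k : J, ‖⟪φ j, h k⟫‖ ^ 2 with hSdef
  have hSbound : ∀ j, A ≤ S j ∧ S j ≤ B := by
    intro j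
    have := hframe (φ j)
    simpa [hSdef, hφ1 j] using this
  -- slice summabilities
  have hslice : ∀ j : K, Summable (fun k : J => F j (h k)) := by
    intro j
    exact (hsumk (φ j)).mul_left (lam j)
  have htsum_slice : ∀ j : K, (∑' k : J, F j (h k)) = lam j * S j := by
    intro j
    rw [hSdef, hFdef]
    exact tsum_mul_left
  have hsumj : Summable (fun j : K => lam j * S j) := by
    refine Summable.of_nonneg_of_le
      (fun j => mul_nonneg (hlam j) (le_trans hA.le (hSbound j).1)) (fun j => ?_)
      (hsum.mul_right B)
    exact mul_le_mul_of_nonneg_left (hSbound j).2 (hlam j)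
  -- summability of the double family and Fubini
  have hG : Summable (Function.uncurry (fun j : K => fun k : J => F j (h k))) := by
    rw [show (Function.uncurry fun j : K => fun k : J => F j (h k))
        = fun p : K × J => F p.1 (h p.2) from rfl,
      summable_prod_of_nonneg (fun p => hFnn p.1 (h p.2))]
    refine ⟨fun j => hslice j, ?_⟩
    simpa only [htsum_slice] using hsumj
  have hswap : (∑' k : J, ∑' j : K, F j (h k)) = ∑' j : K, ∑' k : J, F j (h k) :=
    hG.tsum_comm' hslice (fun k => hFsummable (h k))
  have hXeq : (∑' k : J, (⟪T (h k), h k⟫).re) = ∑' j : K, lam j * S j := by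
    calc (∑' k : J, (⟪T (h k), h k⟫).re) = ∑' k : J, ∑' j : K, F j (h k) :=
          tsum_congr fun k => hre (h k)
      _ = ∑' j : K, ∑' k : J, F j (h k) := hswap
      _ = ∑' j : K, lam j * S j := tsum_congr htsum_slice
  have hlower : A * (∑' j, lam j) ≤ ∑' j : K, lam j * S j := by
    rw [← tsum_mul_left]
    refine Summable.tsum_le_tsum (fun j => ?_) (hsum.mul_left A) hsumj
    calc A * lam j = lam j * A := mul_comm _ _
      _ ≤ lam j * S j := mul_le_mul_of_nonneg_left (hSbound j).1 (hlam j)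
  have hupper : (∑' j : K, lam j * S j) ≤ B * (∑' j, lam j) := by
    rw [← tsum_mul_left]
    refine Summable.tsum_le_tsum (fun j => ?_) hsumj (hsum.mul_left B)
    calc lam j * S j ≤ lam j * B := mul_le_mul_of_nonneg_left (hSbound j).2 (hlam j)
      _ = B * lam j := mul_comm _ _
  rw [hXeq]
  constructor
  · rw [one_div, inv_mul_le_iff₀ hB]
    linarith [hupper]
  · rw [one_div, le_inv_mul_iff₀ hA]
    linarith [hlower]
end

section
/- Comparison estimate (abstract core): Let H be a Hilbert space, P, Q orthogonal projections with Q of finite rank, and let {e_k}_{k∈F} be a finite family of vectors in the range of Q, each of norm r > 0, satisfying the Bessel inequality Σ_{k∈F} |⟨f, e_k⟩|² ≤ B‖f‖² for all f ∈ H. Suppose moreover ‖e_k − P e_k‖ ≤ ε r for all k ∈ F, where 0 ≤ ε < 1. Then (r²/B)(1 − ε)·card(F) ≤ rank P. -/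
open scoped ComplexInnerProductSpace

/-- Abstract core of the comparison theorem: if `P, Q` are orthogonal projections with
`Q` of finite rank, `{e_k}_{k∈F}` is a finite family of vectors of norm `r > 0` in the
range of `Q` satisfying the Bessel inequality with bound `B`, and
`‖e_k − P e_k‖ ≤ ε r` with `0 ≤ ε < 1`, then `(r²/B)(1−ε)·card F ≤ rank P`
(phrased as: whenever `rank P ≤ n`, the left side is at most `n`). -/
theorem comparison_core
    {H : Type*} [NormedAddCommGroup H] [InnerProductSpace ℂ H] [CompleteSpace H]
    (P Q : H →L[ℂ] H)
    (hP_proj : P ∘L P = P) (hP_sa : IsSelfAdjoint P)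
    (hQ_proj : Q ∘L Q = Q) (hQ_sa : IsSelfAdjoint Q)
    (hQ_rank : FiniteDimensional ℂ (LinearMap.range (Q : H →ₗ[ℂ] H)))
    {F : Type*} [Fintype F] (e : F → H) (r B ε : ℝ)
    (hr : 0 < r) (hB : 0 < B) (hε0 : 0 ≤ ε) (hε1 : ε < 1)
    (hrange : ∀ k : F, Q (e k) = e k)
    (hnorm : ∀ k : F, ‖e k‖ = r)
    (hbessel : ∀ f : H, (∑ k : F, ‖⟪f, e k⟫‖ ^ 2) ≤ B * ‖f‖ ^ 2)
    (happrox : ∀ k : F, ‖e k - P (e k)‖ ≤ ε * r) :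
    ∀ n : ℕ, Module.rank ℂ (LinearMap.range (P : H →ₗ[ℂ] H)) ≤ n →
      (r ^ 2 / B) * (1 - ε) * (Fintype.card F : ℝ) ≤ n := by
  intro n hn
  classical
  have hPinner : ∀ x y : H, (⟪x, P y⟫ : ℂ) = ⟪P x, y⟫ := fun x y => by
    conv_lhs => rw [← hP_sa.adjoint_eq]
    rw [ContinuousLinearMap.adjoint_inner_right]
  set V := LinearMap.range (P : H →ₗ[ℂ] H) with hV
  have hfd : FiniteDimensional ℂ V :=
    Module.rank_lt_aleph0_iff.mp (lt_of_le_of_lt hn (Cardinal.nat_lt_aleph0 n))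
  have hm : (Module.finrank ℂ V : ℝ) ≤ (n : ℝ) := by
    exact_mod_cast Module.finrank_le_of_rank_le hn
  -- Pythagoras lower bound on each ‖P (e k)‖²
  have hPidem : ∀ x : H, P (P x) = P x := fun x =>
    congrArg (fun T : H →L[ℂ] H => T x) hP_proj
  have hPe_sq : ∀ k, (1 - ε) * r ^ 2 ≤ ‖P (e k)‖ ^ 2 := by
    intro k
    have horth : (⟪e k - P (e k), P (e k)⟫ : ℂ) = 0 := by
      rw [hPinner, map_sub, hPidem, sub_self, inner_zero_left]
    have hpyth : ‖e k‖ ^ 2 = ‖e k - P (e k)‖ ^ 2 + ‖P (e k)‖ ^ 2 := by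
      have h := norm_add_sq (𝕜 := ℂ) (e k - P (e k)) (P (e k))
      rw [sub_add_cancel, horth] at h
      simpa using h
    have h1 : ‖e k - P (e k)‖ ≤ ε * r := happrox k
    have h0 : (0:ℝ) ≤ ‖e k - P (e k)‖ := norm_nonneg _
    have h2 : ‖e k‖ = r := hnorm k
    nlinarith [sq_nonneg ε, sq_nonneg (1 - ε)]
  -- orthonormal basis of range P
  let b := stdOrthonormalBasis ℂ V
  have hb1 : ∀ j, ‖((b j : V) : H)‖ = 1 := fun j => by
    rw [Submodule.norm_coe]
    exact b.orthonormal.1 j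
  have hPb : ∀ j, P ((b j : V) : H) = ((b j : V) : H) := fun j => by
    obtain ⟨u, hu⟩ := (b j : V).2
    rw [← hu]; exact hPidem u
  have hnormPe : ∀ k, ‖P (e k)‖ ^ 2 = ∑ j, ‖(⟪((b j : V) : H), e k⟫ : ℂ)‖ ^ 2 := by
    intro k
    have hmem : P (e k) ∈ V := LinearMap.mem_range_self _ _
    set y : V := ⟨P (e k), hmem⟩ with hy
    have h1 : ‖y‖ ^ 2 = ∑ j, ‖b.repr y j‖ ^ 2 := by
      rw [← b.repr.norm_map y, EuclideanSpace.norm_eq,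
        Real.sq_sqrt (by positivity)]
    have h2 : ∀ j, b.repr y j = (⟪((b j : V) : H), e k⟫ : ℂ) := by
      intro j
      rw [b.repr_apply_apply]
      have : (⟪b j, y⟫ : ℂ) = ⟪((b j : V) : H), P (e k)⟫ := rfl
      rw [this, hPinner, hPb]
    have h3 : ‖P (e k)‖ = ‖y‖ := rfl
    rw [h3, h1]
    exact Finset.sum_congr rfl fun j _ => by rw [h2]
  -- combine
  have hlow : (1 - ε) * r ^ 2 * (Fintype.card F : ℝ) ≤ ∑ k, ‖P (e k)‖ ^ 2 := by
    calc (1 - ε) * r ^ 2 * (Fintype.card F : ℝ)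
        = ∑ _k : F, (1 - ε) * r ^ 2 := by
          rw [Finset.sum_const, Finset.card_univ, nsmul_eq_mul, mul_comm]
      _ ≤ ∑ k, ‖P (e k)‖ ^ 2 := Finset.sum_le_sum fun k _ => hPe_sq k
  have hhigh : (∑ k, ‖P (e k)‖ ^ 2) ≤ B * (Module.finrank ℂ V : ℝ) := by
    calc (∑ k, ‖P (e k)‖ ^ 2)
        = ∑ k, ∑ j, ‖(⟪((b j : V) : H), e k⟫ : ℂ)‖ ^ 2 :=
          Finset.sum_congr rfl fun k _ => hnormPe k
      _ = ∑ j, ∑ k, ‖(⟪((b j : V) : H), e k⟫ : ℂ)‖ ^ 2 := Finset.sum_comm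
      _ ≤ ∑ j : Fin (Module.finrank ℂ V), B * ‖((b j : V) : H)‖ ^ 2 :=
          Finset.sum_le_sum fun j _ => hbessel _
      _ = B * (Module.finrank ℂ V : ℝ) := by
          simp [hb1, mul_comm]
  have key : (1 - ε) * r ^ 2 * (Fintype.card F : ℝ) ≤ B * n := by
    refine hlow.trans (hhigh.trans ?_)
    have := hm
    nlinarith
  rw [div_mul_eq_mul_div, div_mul_eq_mul_div, div_le_iff₀ hB]
  nlinarith
end
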